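/- For any sequence of real numbers, the determinant of the n×n matrix [a_{i+j-1}] whose (i,j)-entry counts weighted paths from source A_i to sink B_j equals the signed sum over permutations σ of products of path counts, and via the Lindström–Gessel–Viennot sign-reversing involution it equals the number of n-tuples of pairwise non-intersecting path systems connecting A_i to B_i; specialized to large Schröder paths with A_i = (-2i+1,0) and B_j = (2j-1,0), this gives det[r_{i+j-1}] = |Π_n|. -/

import Mathlib

open Matrix

/-- A lattice point in the plane. -/
abbrev Pt := ℤ × ℤ

/-- The points visited by a path starting at `p` taking steps `l`. -/
def pts (p : Pt) (l : List Pt) : List Pt := l.scanl (· + ·) p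

/-- The endpoint of a path starting at `p` taking steps `l`. -/
def endpt (p : Pt) (l : List Pt) : Pt := l.foldl (· + ·) p

/-- `l` is the step list of a large Schröder path from `p` to `q`:
steps are U=(1,1), D=(1,-1), L=(2,0) and the path never goes below the x-axis. -/
def IsLargePath (p q : Pt) (l : List Pt) : Prop :=
  (∀ s ∈ l, s = (1, 1) ∨ s = (1, -1) ∨ s = (2, 0)) ∧
  (∀ v ∈ pts p l, 0 ≤ v.2) ∧
  endpt p l = q

/-- A small Schröder path: a large Schröder path with no level step on the x-axis. -/
def IsSmallPath (p q : Pt) (l : List Pt) : Prop :=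
  IsLargePath p q l ∧
  ∀ (i : ℕ) (h : i < l.length), l.get ⟨i, h⟩ = (2, 0) → (endpt p (l.take i)).2 ≠ 0

/-- The `k`-th large Schröder number: the number of large Schröder paths
from `(0,0)` to `(2k,0)`. -/
noncomputable def schR (k : ℕ) : ℕ := Nat.card {l : List Pt // IsLargePath (0, 0) (2 * k, 0) l}

/-- The `k`-th small Schröder number: the number of small Schröder paths
from `(0,0)` to `(2k,0)`. -/
noncomputable def schS (k : ℕ) : ℕ := Nat.card {l : List Pt // IsSmallPath (0, 0) (2 * k, 0) l}

/-- `Π n`: `n`-tuples of pairwise non-intersecting large Schröder paths where the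
`i`-th path (1-indexed; here index `i : Fin n` stands for `i+1`) runs from
`(-2(i+1)+1, 0)` to `(2(i+1)-1, 0)`. -/
def PiSet (n : ℕ) : Set (Fin n → List Pt) :=
  {π | (∀ i : Fin n, IsLargePath (-(2 * (i : ℤ) + 1), 0) (2 * (i : ℤ) + 1, 0) (π i)) ∧
    ∀ i j : Fin n, i ≠ j → ∀ v ∈ pts (-(2 * (i : ℤ) + 1), 0) (π i),
      v ∉ pts (-(2 * (j : ℤ) + 1), 0) (π j)}

/-- `Ω n`: the analogous tuples of small Schröder paths. -/
def OmegaSet (n : ℕ) : Set (Fin n → List Pt) :=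
  {ω | (∀ i : Fin n, IsSmallPath (-(2 * (i : ℤ) + 1), 0) (2 * (i : ℤ) + 1, 0) (ω i)) ∧
    ∀ i j : Fin n, i ≠ j → ∀ v ∈ pts (-(2 * (i : ℤ) + 1), 0) (ω i),
      v ∉ pts (-(2 * (j : ℤ) + 1), 0) (ω j)}

/-- `Π* n`: `n`-tuples `(μ₀,…,μ_{n-1})` of pairwise non-intersecting large Schröder
paths with `μ i` from `(-2i,0)` to `(2i,0)`. -/
def PiStarSet (n : ℕ) : Set (Fin n → List Pt) :=
  {μ | (∀ i : Fin n, IsLargePath (-(2 * (i : ℤ)), 0) (2 * (i : ℤ), 0) (μ i)) ∧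
    ∀ i j : Fin n, i ≠ j → ∀ v ∈ pts (-(2 * (i : ℤ)), 0) (μ i),
      v ∉ pts (-(2 * (j : ℤ)), 0) (μ j)}

/-- `Ω* n`: the analogous tuples of small Schröder paths. -/
def OmegaStarSet (n : ℕ) : Set (Fin n → List Pt) :=
  {μ | (∀ i : Fin n, IsSmallPath (-(2 * (i : ℤ)), 0) (2 * (i : ℤ), 0) (μ i)) ∧
    ∀ i j : Fin n, i ≠ j → ∀ v ∈ pts (-(2 * (i : ℤ)), 0) (μ i),
      v ∉ pts (-(2 * (j : ℤ)), 0) (μ j)}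

/-- The unit square with lower-left corner `c` lies in the Aztec diamond `Az(n)`,
i.e. all four of its corners `(x,y)` satisfy `|x| + |y| ≤ n + 1`. -/
def aztecCell (n : ℕ) (c : Pt) : Prop :=
  |c.1| + |c.2| ≤ (n : ℤ) + 1 ∧ |c.1 + 1| + |c.2| ≤ (n : ℤ) + 1 ∧
  |c.1| + |c.2 + 1| ≤ (n : ℤ) + 1 ∧ |c.1 + 1| + |c.2 + 1| ≤ (n : ℤ) + 1

/-- Two unit squares (given by lower-left corners) are edge-adjacent,
so together they form a 1×2 or 2×1 domino. -/
def adjCell (c d : Pt) : Prop :=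
  d = (c.1 + 1, c.2) ∨ d = (c.1 - 1, c.2) ∨ d = (c.1, c.2 + 1) ∨ d = (c.1, c.2 - 1)

/-- A domino tiling of `Az(n)`, encoded as the involution matching each cell of the
diamond with the other cell of its domino (and fixing everything outside). -/
def IsAztecTiling (n : ℕ) (m : Pt → Pt) : Prop :=
  (∀ c, aztecCell n c → aztecCell n (m c) ∧ adjCell c (m c) ∧ m (m c) = c) ∧
  ∀ c, ¬ aztecCell n c → m c = c

/-- The number of domino tilings of the Aztec diamond of order `n`. -/
noncomputable def aztecTilingCount (n : ℕ) : ℕ := Nat.card {m : Pt → Pt // IsAztecTiling n m}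

/-- The map sending `(π₁,…,π_{n-1})` to `(μ₀,…,μ_{n-1})` with `μ₀` the empty path
at the origin and `μᵢ = U πᵢ D`. -/
def extendStar {n : ℕ} (π : Fin (n - 1) → List Pt) (i : Fin n) : List Pt :=
  if h : (i : ℕ) = 0 then []
  else (1, 1) :: π ⟨(i : ℕ) - 1, by omega⟩ ++ [(1, -1)]

namespace LGV

/-- valid steps -/
def Stp (s : Pt) : Prop := s = (1, 1) ∨ s = (1, -1) ∨ s = (2, 0)

@[simp] lemma pts_nil (p : Pt) : pts p [] = [p] := rfl
@[simp] lemma pts_cons (p s : Pt) (l : List Pt) : pts p (s :: l) = p :: pts (p + s) l := by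
  simp only [pts, List.scanl_cons]
@[simp] lemma endpt_nil (p : Pt) : endpt p [] = p := rfl
@[simp] lemma endpt_cons (p s : Pt) (l : List Pt) : endpt p (s :: l) = endpt (p + s) l := rfl

lemma self_mem_pts (p : Pt) (l : List Pt) : p ∈ pts p l := by
  cases l <;> simp

lemma pts_length (p : Pt) (l : List Pt) : (pts p l).length = l.length + 1 :=
  List.length_scanl

lemma endpt_mem_pts (p : Pt) (l : List Pt) : endpt p l ∈ pts p l := by
  induction l generalizing p with
  | nil => simp
  | cons s l ih => simp [ih (p + s)]

lemma endpt_append (p : Pt) (l₁ l₂ : List Pt) :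
    endpt p (l₁ ++ l₂) = endpt (endpt p l₁) l₂ :=
  List.foldl_append

lemma pts_append (p : Pt) (l₁ l₂ : List Pt) :
    pts p (l₁ ++ l₂) = pts p l₁ ++ (pts (endpt p l₁) l₂).tail := by
  induction l₁ generalizing p with
  | nil =>
      cases l₂ with
      | nil => simp
      | cons s l => simp
  | cons s l ih => simp [ih (p + s)]

lemma mem_pts_append {v : Pt} (p : Pt) (l₁ l₂ : List Pt) :
    v ∈ pts p (l₁ ++ l₂) ↔ v ∈ pts p l₁ ∨ v ∈ pts (endpt p l₁) l₂ := by
  rw [pts_append, List.mem_append]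
  constructor
  · rintro (h | h)
    · exact Or.inl h
    · exact Or.inr (List.mem_of_mem_tail h)
  · rintro (h | h)
    · exact Or.inl h
    · rcases l₂ with _ | ⟨s, l⟩
      · simp at h; exact Or.inl (h ▸ endpt_mem_pts p l₁)
      · simp only [pts_cons, List.mem_cons] at h
        rcases h with h | h
        · exact Or.inl (h ▸ endpt_mem_pts p l₁)
        · exact Or.inr (by simpa using h)

lemma pts_take (p : Pt) (l : List Pt) (t : ℕ) :
    pts p (l.take t) = (pts p l).take (t + 1) := by
  induction l generalizing p t with
  | nil => simp
  | cons s l ih =>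
      cases t with
      | zero => simp
      | succ t => simp [ih (p + s) t]

lemma pts_drop (p : Pt) (l : List Pt) (t : ℕ) (ht : t ≤ l.length) :
    pts (endpt p (l.take t)) (l.drop t) = (pts p l).drop t := by
  induction l generalizing p t with
  | nil =>
      simp only [List.length_nil, Nat.le_zero] at ht
      subst ht; simp
  | cons s l ih =>
      cases t with
      | zero => simp
      | succ t => simpa using ih (p + s) t (by simpa using ht)

lemma getElem_pts (p : Pt) (l : List Pt) (t : ℕ) (h : t < (pts p l).length) :
    (pts p l)[t] = endpt p (l.take t) := by
  induction l generalizing p t with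
  | nil => simp [pts_length] at h; subst h; simp
  | cons s l ih =>
      cases t with
      | zero => simp
      | succ t =>
          have hlt : t < (pts (p + s) l).length := by
            simp [pts_length] at h ⊢; omega
          simpa using ih (p + s) t hlt

lemma pts_map_add (d p : Pt) (l : List Pt) :
    pts (d + p) l = (pts p l).map (d + ·) := by
  induction l generalizing p with
  | nil => simp
  | cons s l ih => simp [add_assoc, ih (p + s)]

lemma endpt_map_add (d p : Pt) (l : List Pt) :
    endpt (d + p) l = d + endpt p l := by
  induction l generalizing p with
  | nil => simp
  | cons s l ih => simp [add_assoc, ih (p + s)]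

/-- x-coordinates strictly increase along a path with valid steps -/
lemma step_x_pos {s : Pt} (hs : Stp s) : 1 ≤ s.1 := by
  rcases hs with h | h | h <;> simp [h]

lemma step_y_abs {s : Pt} (hs : Stp s) : s.2 = 1 ∨ s.2 = -1 ∨ s.2 = 0 := by
  rcases hs with h | h | h <;> simp [h]

lemma step_parity {s : Pt} (hs : Stp s) : (s.1 + s.2) % 2 = 0 := by
  rcases hs with h | h | h <;> simp [h]

lemma mem_pts_x_ge {v p : Pt} {l : List Pt} (hs : ∀ s ∈ l, Stp s) (hv : v ∈ pts p l) :
    p.1 ≤ v.1 := by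
  induction l generalizing p with
  | nil => simp at hv; simp [hv]
  | cons s l ih =>
      simp only [pts_cons, List.mem_cons] at hv
      rcases hv with h | h
      · simp [h]
      · have h1 : (p + s).1 ≤ v.1 := ih (fun t ht => hs t (List.mem_cons_of_mem _ ht)) h
        have h2 : 1 ≤ s.1 := step_x_pos (hs s (List.mem_cons_self))
        have : (p + s).1 = p.1 + s.1 := rfl
        omega

lemma pts_pairwise {p : Pt} {l : List Pt} (hs : ∀ s ∈ l, Stp s) :
    (pts p l).Pairwise (fun a b => a.1 < b.1) := by
  induction l generalizing p with
  | nil => simp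
  | cons s l ih =>
      simp only [pts_cons]
      refine List.Pairwise.cons (fun v hv => ?_) (ih fun t ht => hs t (List.mem_cons_of_mem _ ht))
      have h1 : (p + s).1 ≤ v.1 := mem_pts_x_ge (fun t ht => hs t (List.mem_cons_of_mem _ ht)) hv
      have h2 : 1 ≤ s.1 := step_x_pos (hs s (List.mem_cons_self))
      have : (p + s).1 = p.1 + s.1 := rfl
      omega

lemma pts_nodup {p : Pt} {l : List Pt} (hs : ∀ s ∈ l, Stp s) : (pts p l).Nodup :=
  (pts_pairwise hs).imp (fun h => by rintro rfl; exact lt_irrefl _ h)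

lemma mem_pts_parity {v p : Pt} {l : List Pt} (hs : ∀ s ∈ l, Stp s) (hv : v ∈ pts p l) :
    (v.1 + v.2) % 2 = (p.1 + p.2) % 2 := by
  induction l generalizing p with
  | nil => simp at hv; simp [hv]
  | cons s l ih =>
      simp only [pts_cons, List.mem_cons] at hv
      rcases hv with h | h
      · simp [h]
      · have h1 := ih (fun t ht => hs t (List.mem_cons_of_mem _ ht)) h
        have h2 := step_parity (hs s (List.mem_cons_self))
        have e1 : (p + s).1 = p.1 + s.1 := rfl
        have e2 : (p + s).2 = p.2 + s.2 := rfl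
        omega

lemma endpt_x_ge {p : Pt} {l : List Pt} (hs : ∀ s ∈ l, Stp s) :
    p.1 + l.length ≤ (endpt p l).1 := by
  induction l generalizing p with
  | nil => simp
  | cons s l ih =>
      have h1 := ih (p := p + s) (fun t ht => hs t (List.mem_cons_of_mem _ ht))
      have h2 : 1 ≤ s.1 := step_x_pos (hs s (List.mem_cons_self))
      have : (p + s).1 = p.1 + s.1 := rfl
      simp only [endpt_cons, List.length_cons]
      push_cast
      omega

lemma endpt_x_ge' {p : Pt} {l : List Pt} (hs : ∀ s ∈ l, Stp s) :
    p.1 ≤ (endpt p l).1 := by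
  have := endpt_x_ge (p := p) hs; omega

end LGV

namespace LGV

/-- height profile of a path over each column -/
def hfun : Pt → List Pt → ℤ → ℤ
  | p, [], _ => p.2
  | p, s :: l, x => if x < p.1 + s.1 then p.2 else hfun (p + s) l x

@[simp] lemma hfun_nil (p : Pt) (x : ℤ) : hfun p [] x = p.2 := rfl
lemma hfun_cons (p s : Pt) (l : List Pt) (x : ℤ) :
    hfun p (s :: l) x = if x < p.1 + s.1 then p.2 else hfun (p + s) l x := rfl

lemma step_cases {s : Pt} (hs : Stp s) :
    (s.1 = 1 ∧ s.2 = 1) ∨ (s.1 = 1 ∧ s.2 = -1) ∨ (s.1 = 2 ∧ s.2 = 0) := by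
  rcases hs with h | h | h <;> simp [h]

@[simp] lemma add_fst (p s : Pt) : (p + s).1 = p.1 + s.1 := rfl
@[simp] lemma add_snd (p s : Pt) : (p + s).2 = p.2 + s.2 := rfl

lemma hfun_left {p : Pt} {l : List Pt} (hs : ∀ s ∈ l, Stp s) {x : ℤ} (hx : x ≤ p.1) :
    hfun p l x = p.2 := by
  cases l with
  | nil => rfl
  | cons s l =>
      have h2 : 1 ≤ s.1 := step_x_pos (hs s (List.mem_cons_self))
      rw [hfun_cons, if_pos (by omega)]

lemma hfun_right {p : Pt} {l : List Pt} (hs : ∀ s ∈ l, Stp s) {x : ℤ}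
    (hx : (endpt p l).1 ≤ x) : hfun p l x = (endpt p l).2 := by
  induction l generalizing p with
  | nil => rfl
  | cons s l ih =>
      have hs' : ∀ t ∈ l, Stp t := fun t ht => hs t (List.mem_cons_of_mem _ ht)
      have h1 : (p + s).1 ≤ (endpt (p + s) l).1 := endpt_x_ge' hs'
      rw [endpt_cons] at hx ⊢
      rw [hfun_cons, if_neg (by rw [add_fst] at h1; omega)]
      exact ih hs' hx

lemma hfun_lipschitz {p : Pt} {l : List Pt} (hs : ∀ s ∈ l, Stp s) (x : ℤ) :
    hfun p l x - 1 ≤ hfun p l (x + 1) ∧ hfun p l (x + 1) ≤ hfun p l x + 1 := by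
  induction l generalizing p with
  | nil => simp
  | cons s l ih =>
      have hs' : ∀ t ∈ l, Stp t := fun t ht => hs t (List.mem_cons_of_mem _ ht)
      have hc := step_cases (hs s (List.mem_cons_self))
      rw [hfun_cons, hfun_cons]
      by_cases h1 : x + 1 < p.1 + s.1
      · rw [if_pos h1, if_pos (by omega)]; omega
      · rw [if_neg h1]
        by_cases h0 : x < p.1 + s.1
        · rw [if_pos h0]
          have he : hfun (p + s) l (x + 1) = (p + s).2 :=
            hfun_left hs' (by rw [add_fst]; omega)
          rw [he, add_snd]
          omega
        · rw [if_neg h0]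
          exact ih hs'

lemma hfun_of_mem_pts {p v : Pt} {l : List Pt} (hs : ∀ s ∈ l, Stp s) (hv : v ∈ pts p l) :
    hfun p l v.1 = v.2 := by
  induction l generalizing p with
  | nil => simp at hv; simp [hv]
  | cons s l ih =>
      have hs' : ∀ t ∈ l, Stp t := fun t ht => hs t (List.mem_cons_of_mem _ ht)
      simp only [pts_cons, List.mem_cons] at hv
      rcases hv with rfl | h
      · exact hfun_left hs le_rfl
      · have h1 : (p + s).1 ≤ v.1 := mem_pts_x_ge hs' h
        rw [add_fst] at h1
        rw [hfun_cons, if_neg (by omega)]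
        exact ih hs' h

lemma hfun_nonneg {p : Pt} {l : List Pt} (hnn : ∀ v ∈ pts p l, 0 ≤ v.2) (x : ℤ) :
    0 ≤ hfun p l x := by
  induction l generalizing p with
  | nil => exact hnn p (self_mem_pts _ _)
  | cons s l ih =>
      rw [hfun_cons]
      by_cases h : x < p.1 + s.1
      · rw [if_pos h]; exact hnn p (self_mem_pts _ _)
      · rw [if_neg h]
        exact ih (fun v hv => hnn v (by simp [hv]))

lemma hfun_mem_of_parity {p : Pt} {l : List Pt} (hs : ∀ s ∈ l, Stp s) {x : ℤ}
    (hx1 : p.1 ≤ x) (hx2 : x ≤ (endpt p l).1)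
    (hpar : (x + hfun p l x) % 2 = (p.1 + p.2) % 2) :
    (x, hfun p l x) ∈ pts p l := by
  induction l generalizing p with
  | nil =>
      rw [endpt_nil] at hx2
      have : x = p.1 := le_antisymm hx2 hx1
      subst this
      simp
  | cons s l ih =>
      have hs' : ∀ t ∈ l, Stp t := fun t ht => hs t (List.mem_cons_of_mem _ ht)
      have hc := step_cases (hs s (List.mem_cons_self))
      by_cases h0 : x < p.1 + s.1
      · have hh : hfun p (s :: l) x = p.2 := by rw [hfun_cons, if_pos h0]
        rw [hh] at hpar ⊢
        have hxp : x = p.1 := by omega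
        subst hxp
        have : (p.1, p.2) = p := rfl
        rw [this]
        exact self_mem_pts _ _
      · have hh : hfun p (s :: l) x = hfun (p + s) l x := by rw [hfun_cons, if_neg h0]
        rw [hh] at hpar ⊢
        rw [endpt_cons] at hx2
        have e1 : (p + s).1 = p.1 + s.1 := rfl
        have e2 : (p + s).2 = p.2 + s.2 := rfl
        have hpar2 : (x + hfun (p + s) l x) % 2 = ((p + s).1 + (p + s).2) % 2 := by
          rw [e1, e2]; omega
        rw [pts_cons]; exact List.mem_cons_of_mem _ (ih hs' (by rw [e1]; omega) hx2 hpar2)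

lemma hfun_skip {p : Pt} {l : List Pt} (hs : ∀ s ∈ l, Stp s) {x : ℤ}
    (hx1 : p.1 < x) (hx2 : x < (endpt p l).1)
    (hpar : (x + hfun p l x) % 2 ≠ (p.1 + p.2) % 2) :
    hfun p l (x + 1) = hfun p l x := by
  induction l generalizing p with
  | nil => rw [endpt_nil] at hx2; omega
  | cons s l ih =>
      have hs' : ∀ t ∈ l, Stp t := fun t ht => hs t (List.mem_cons_of_mem _ ht)
      have hc := step_cases (hs s (List.mem_cons_self))
      rw [endpt_cons] at hx2
      by_cases h0 : x < p.1 + s.1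
      · have hsl : s.1 = 2 ∧ s.2 = 0 := by
          have hh : hfun p (s :: l) x = p.2 := by rw [hfun_cons, if_pos h0]
          rw [hh] at hpar
          rcases hc with h | h | h
          · omega
          · omega
          · exact h
        have hx : x = p.1 + 1 := by omega
        have he : hfun (p + s) l (x + 1) = (p + s).2 :=
          hfun_left hs' (by rw [add_fst]; omega)
        have hL : hfun p (s :: l) (x + 1) = (p + s).2 := by
          rw [hfun_cons, if_neg (by omega)]; exact he
        have hR : hfun p (s :: l) x = p.2 := by rw [hfun_cons, if_pos h0]
        rw [hL, hR, add_snd]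
        omega
      · have hh : hfun p (s :: l) x = hfun (p + s) l x := by rw [hfun_cons, if_neg h0]
        have e1 : (p + s).1 = p.1 + s.1 := rfl
        have e2 : (p + s).2 = p.2 + s.2 := rfl
        have hxs : p.1 + s.1 ≠ x := by
          intro he
          apply hpar
          have h2 : hfun (p + s) l x = (p + s).2 := hfun_left hs' (by rw [e1]; omega)
          rw [hh, h2, e2]
          omega
        rw [hh] at hpar
        rw [hfun_cons, if_neg (by omega), hfun_cons, if_neg h0]
        have hpar2 : (x + hfun (p + s) l x) % 2 ≠ ((p + s).1 + (p + s).2) % 2 := by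
          rw [e1, e2]; omega
        exact ih hs' (by rw [e1]; omega) hx2 hpar2

end LGV

namespace LGV

lemma key_step {p0 : Pt} {L : List Pt} (hs : ∀ s ∈ L, Stp s)
    (hnn : ∀ v ∈ pts p0 L, 0 ≤ v.2) (hp2 : p0.2 = 0) (hp1 : p0.1 % 2 = 1)
    (he2 : (endpt p0 L).2 = 0)
    {q s : Pt} (hq : Stp s) (hqy : 0 ≤ q.2) (hqy' : 0 ≤ q.2 + s.2)
    (hqpar : (q.1 + q.2) % 2 = 1)
    (hg : hfun p0 L q.1 ≤ q.2) (hg' : q.2 + s.2 < hfun p0 L (q.1 + s.1)) :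
    q ∈ pts p0 L ∨ q + s ∈ pts p0 L := by
  have he1 : (endpt p0 L).1 % 2 = 1 := by
    have := mem_pts_parity hs (endpt_mem_pts p0 L)
    omega
  have hse : p0.1 ≤ (endpt p0 L).1 := endpt_x_ge' hs
  have hstart : hfun p0 L p0.1 = 0 := by rw [hfun_left hs le_rfl, hp2]
  have hend0 : hfun p0 L (endpt p0 L).1 = 0 := by rw [hfun_right hs le_rfl, he2]
  -- the landing column is strictly inside the range of the path
  have hrange : p0.1 < q.1 + s.1 ∧ q.1 + s.1 < (endpt p0 L).1 := by
    constructor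
    · by_contra h
      push_neg at h
      rw [hfun_left hs h, hp2] at hg'
      omega
    · by_contra h
      push_neg at h
      rw [hfun_right hs h, he2] at hg'
      omega
  -- the "real column" case producing an intersection at q
  have hreal : hfun p0 L q.1 = q.2 → p0.1 ≤ q.1 → q.1 ≤ (endpt p0 L).1 →
      q ∈ pts p0 L := by
    intro h0 h1 h2
    have hmem := hfun_mem_of_parity hs h1 h2 (by omega)
    have : (q.1, hfun p0 L q.1) = q := by rw [h0]
    exact this ▸ hmem
  have hlip : ∀ x : ℤ, hfun p0 L x - 1 ≤ hfun p0 L (x + 1) ∧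
      hfun p0 L (x + 1) ≤ hfun p0 L x + 1 := hfun_lipschitz hs
  rcases step_cases hq with ⟨hs1, hs2⟩ | ⟨hs1, hs2⟩ | ⟨hs1, hs2⟩
  · -- up step: impossible
    exfalso
    rw [hs1, hs2] at hg'
    have := (hlip q.1).2
    omega
  · -- down step
    rw [hs1, hs2] at hg'
    have hy1 : 1 ≤ q.2 := by omega
    have hub : q.2 - 1 ≤ hfun p0 L q.1 := by
      have := (hlip q.1).2
      omega
    by_cases hg0 : hfun p0 L q.1 = q.2
    · by_cases hin : p0.1 ≤ q.1 ∧ q.1 ≤ (endpt p0 L).1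
      · exact Or.inl (hreal hg0 hin.1 hin.2)
      · exfalso
        rcases not_and_or.mp hin with h | h <;> push_neg at h
        · rw [hfun_left hs (by omega)] at hg0; omega
        · rw [hfun_right hs (by omega)] at hg0; omega
    · exfalso
      have hg1 : hfun p0 L q.1 = q.2 - 1 := by omega
      by_cases hin : p0.1 < q.1 ∧ q.1 < (endpt p0 L).1
      · have hsk := hfun_skip hs hin.1 hin.2 (by omega)
        omega
      · rcases not_and_or.mp hin with h | h <;> push_neg at h
        · have h0 : hfun p0 L q.1 = 0 := by rw [hfun_left hs h, hp2]
          have hq1 : q.1 % 2 = 0 := by omega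
          have hlt : q.1 + 1 ≤ p0.1 := by omega
          rw [hfun_left hs hlt, hp2] at hg'
          omega
        · have h0 : hfun p0 L q.1 = 0 := by rw [hfun_right hs h, he2]
          have hq1 : q.1 % 2 = 0 := by omega
          have hlt : (endpt p0 L).1 ≤ q.1 + 1 := by omega
          rw [hfun_right hs hlt, he2] at hg'
          omega
  · -- level step
    rw [hs1, hs2] at hg'
    have hub : q.2 - 1 ≤ hfun p0 L q.1 := by
      have h1 := (hlip q.1).2
      have h2 := (hlip (q.1 + 1)).2
      have : q.1 + 1 + 1 = q.1 + 2 := by ring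
      rw [this] at h2
      omega
    by_cases hg0 : hfun p0 L q.1 = q.2
    · by_cases hin : p0.1 ≤ q.1 ∧ q.1 ≤ (endpt p0 L).1
      · exact Or.inl (hreal hg0 hin.1 hin.2)
      · exfalso
        rcases not_and_or.mp hin with h | h <;> push_neg at h
        · have h0 : hfun p0 L q.1 = 0 := by rw [hfun_left hs (by omega), hp2]
          have hq1 : q.1 % 2 = 1 := by omega
          have hlt : q.1 + 2 ≤ p0.1 := by omega
          rw [hfun_left hs hlt, hp2] at hg'
          omega
        · have h0 : hfun p0 L q.1 = 0 := by rw [hfun_right hs (by omega), he2]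
          have hlt : (endpt p0 L).1 ≤ q.1 + 2 := by omega
          rw [hfun_right hs hlt, he2] at hg'
          omega
    · exfalso
      have hg1 : hfun p0 L q.1 = q.2 - 1 := by omega
      by_cases hin : p0.1 < q.1 ∧ q.1 < (endpt p0 L).1
      · have hsk := hfun_skip hs hin.1 hin.2 (by omega)
        have h2 := (hlip (q.1 + 1)).2
        have : q.1 + 1 + 1 = q.1 + 2 := by ring
        rw [this] at h2
        omega
      · rcases not_and_or.mp hin with h | h <;> push_neg at h
        · have h0 : hfun p0 L q.1 = 0 := by rw [hfun_left hs h, hp2]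
          have hq1 : q.1 % 2 = 0 := by omega
          have hlts : q.1 + 2 ≤ p0.1 + 1 := by omega
          have hp0l := (hlip p0.1).2
          rw [hstart] at hp0l
          by_cases h2 : q.1 + 2 ≤ p0.1
          · rw [hfun_left hs h2, hp2] at hg'
            omega
          · have : q.1 + 2 = p0.1 + 1 := by omega
            rw [this] at hg'
            omega
        · have h0 : hfun p0 L q.1 = 0 := by rw [hfun_right hs h, he2]
          have hq1 : q.1 % 2 = 0 := by omega
          have hlt : (endpt p0 L).1 ≤ q.1 + 2 := by omega
          rw [hfun_right hs hlt, he2] at hg'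
          omega

/-- traversal: a path starting weakly above the profile and ending strictly below it
must meet the other path -/
lemma traverse {p0 : Pt} {L : List Pt} (hs : ∀ s ∈ L, Stp s)
    (hnn : ∀ v ∈ pts p0 L, 0 ≤ v.2) (hp2 : p0.2 = 0) (hp1 : p0.1 % 2 = 1)
    (he2 : (endpt p0 L).2 = 0)
    {q0 : Pt} {M : List Pt} (hms : ∀ s ∈ M, Stp s)
    (hqnn : ∀ v ∈ pts q0 M, 0 ≤ v.2) (hqpar : (q0.1 + q0.2) % 2 = 1)
    (h0 : hfun p0 L q0.1 ≤ q0.2)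
    (hend : (endpt q0 M).2 < hfun p0 L (endpt q0 M).1) :
    ∃ v ∈ pts q0 M, v ∈ pts p0 L := by
  induction M generalizing q0 with
  | nil => rw [endpt_nil] at hend; omega
  | cons s m ih =>
      have hms' : ∀ t ∈ m, Stp t := fun t ht => hms t (List.mem_cons_of_mem _ ht)
      have hstp := hms s (List.mem_cons_self)
      have hq1nn : ∀ v ∈ pts (q0 + s) m, 0 ≤ v.2 := fun v hv => hqnn v (by simp [hv])
      have hq1par : ((q0 + s).1 + (q0 + s).2) % 2 = 1 := by
        have := step_parity hstp
        rw [add_fst, add_snd]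
        omega
      by_cases hup : hfun p0 L (q0 + s).1 ≤ (q0 + s).2
      · obtain ⟨v, hv1, hv2⟩ := ih hms' hq1nn hq1par hup (by rw [endpt_cons] at hend; exact hend)
        exact ⟨v, by simp [hv1], hv2⟩
      · push_neg at hup
        have hkey := key_step hs hnn hp2 hp1 he2 hstp (hqnn q0 (self_mem_pts _ _))
          (by have := hqnn (q0 + s) (by simp [self_mem_pts]); rw [add_snd] at this; exact this)
          hqpar h0 (by rw [add_fst, add_snd] at hup; exact hup)
        rcases hkey with h | h
        · exact ⟨q0, self_mem_pts _ _, h⟩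
        · exact ⟨q0 + s, by simp [self_mem_pts], h⟩

/-- two large Schröder paths with interleaved endpoints on the axis must intersect -/
lemma must_intersect {a b c d : ℤ} {L M : List Pt}
    (hL : IsLargePath (a, 0) (b, 0) L) (hM : IsLargePath (c, 0) (d, 0) M)
    (ha : a % 2 = 1) (hc : c % 2 = 1) (hca : c < a) (had : a < d) (hdb : d < b) :
    ∃ v ∈ pts (c, 0) M, v ∈ pts (a, 0) L := by
  obtain ⟨hs, hnn, hend⟩ := hL
  obtain ⟨hms, hqnn, hqend⟩ := hM
  have hs' : ∀ s ∈ L, Stp s := hs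
  have hms' : ∀ s ∈ M, Stp s := hms
  have hp2 : ((a, 0) : Pt).2 = 0 := rfl
  have he2 : (endpt (a, 0) L).2 = 0 := by rw [hend]
  have he1 : (endpt (a, 0) L).1 = b := by rw [hend]
  by_cases hd0 : hfun (a, 0) L d ≤ 0
  · -- the endpoint (d,0) of M lies on L
    have h0 : hfun (a, 0) L d = 0 :=
      le_antisymm hd0 (hfun_nonneg hnn d)
    have hdodd : d % 2 = 1 := by
      have := mem_pts_parity hms' (endpt_mem_pts (c, 0) M)
      rw [hqend] at this
      have hc' : (((c, 0) : Pt).1 + ((c, 0) : Pt).2) % 2 = (c + 0) % 2 := rfl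
      have hd' : (((d, 0) : Pt).1 + ((d, 0) : Pt).2) % 2 = (d + 0) % 2 := rfl
      rw [hc', hd'] at this
      omega
    have hmem := hfun_mem_of_parity (p := (a, 0)) (l := L) hs' (x := d) (by show a ≤ d; omega) (by rw [he1]; omega)
      (by rw [h0]; show (d + 0) % 2 = (a + 0) % 2; omega)
    rw [h0] at hmem
    refine ⟨(d, 0), ?_, hmem⟩
    have := endpt_mem_pts (c, 0) M
    rw [hqend] at this
    exact this
  · push_neg at hd0
    refine traverse hs' hnn hp2 (by show a % 2 = 1; omega) he2 hms' hqnn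
      (by show (c + 0) % 2 = 1; omega) ?_ ?_
    · rw [hfun_left hs' (by show (c : ℤ) ≤ a; omega)]
    · rw [hqend]
      exact hd0

end LGV

namespace LGV

lemma isLargePath_length {p q : Pt} {l : List Pt} (h : IsLargePath p q l) :
    l.length ≤ (q.1 - p.1).toNat := by
  have h1 := endpt_x_ge (p := p) h.1
  rw [h.2.2] at h1
  omega

def encStep (s : Pt) : Fin 3 := if s = (1, 1) then 0 else if s = (1, -1) then 1 else 2
def decStep : Fin 3 → Pt := ![(1, 1), (1, -1), (2, 0)]

lemma decStep_encStep {s : Pt} (hs : Stp s) : decStep (encStep s) = s := by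
  rcases hs with h | h | h <;> subst h <;> simp [encStep, decStep, Prod.ext_iff] <;> decide

lemma mapenc_inj {l1 l2 : List Pt} (h1 : ∀ s ∈ l1, Stp s) (h2 : ∀ s ∈ l2, Stp s)
    (h : l1.map encStep = l2.map encStep) : l1 = l2 := by
  have e1 : l1.map (fun s => decStep (encStep s)) = l1.map id :=
    List.map_congr_left fun s hs => (decStep_encStep (h1 s hs)).trans rfl
  have e2 : l2.map (fun s => decStep (encStep s)) = l2.map id :=
    List.map_congr_left fun s hs => (decStep_encStep (h2 s hs)).trans rfl
  calc l1 = l1.map id := (List.map_id l1).symm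
    _ = l1.map (fun s => decStep (encStep s)) := e1.symm
    _ = (l1.map encStep).map decStep := by rw [List.map_map]; rfl
    _ = (l2.map encStep).map decStep := by rw [h]
    _ = l2.map (fun s => decStep (encStep s)) := by rw [List.map_map]; rfl
    _ = l2.map id := e2
    _ = l2 := List.map_id l2

instance finite_paths (p q : Pt) : Finite {l : List Pt // IsLargePath p q l} := by
  haveI : Finite ↥{m : List (Fin 3) | m.length ≤ (q.1 - p.1).toNat} :=
    (List.finite_length_le (Fin 3) _).to_subtype
  refine Finite.of_injective (fun l => (⟨l.1.map encStep, by
    show (l.1.map encStep).length ≤ _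
    rw [List.length_map]
    exact isLargePath_length l.2⟩ : ↥{m : List (Fin 3) | m.length ≤ (q.1 - p.1).toNat})) ?_
  intro l1 l2 h
  apply Subtype.ext
  exact mapenc_inj l1.2.1 l2.2.1 (congrArg Subtype.val h)

lemma isLargePath_shift (d : ℤ) (p q : Pt) (l : List Pt) :
    IsLargePath ((d, 0) + p) ((d, 0) + q) l ↔ IsLargePath p q l := by
  constructor
  · rintro ⟨h1, h2, h3⟩
    refine ⟨h1, fun v hv => ?_, ?_⟩
    · have := h2 ((d, 0) + v) (by rw [pts_map_add]; exact List.mem_map_of_mem hv)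
      rw [add_snd] at this
      simpa using this
    · rw [endpt_map_add] at h3
      exact add_left_cancel h3
  · rintro ⟨h1, h2, h3⟩
    refine ⟨h1, fun v hv => ?_, ?_⟩
    · rw [pts_map_add] at hv
      obtain ⟨w, hw, rfl⟩ := List.mem_map.mp hv
      have := h2 w hw
      rw [add_snd]
      simpa using this
    · rw [endpt_map_add, h3]

lemma schR_eq (x : ℤ) (k : ℕ) :
    Nat.card {l : List Pt // IsLargePath (x, 0) (x + 2 * k, 0) l} = schR k := by
  rw [schR]
  apply Nat.card_congr
  apply Equiv.subtypeEquivRight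
  intro l
  have h := isLargePath_shift x ((0 : ℤ), (0 : ℤ)) ((2 * k : ℤ), (0 : ℤ)) l
  have e1 : ((x, 0) : Pt) + ((0 : ℤ), (0 : ℤ)) = ((x, 0) : Pt) := by
    simp [Prod.ext_iff]
  have e2 : ((x, 0) : Pt) + ((2 * k : ℤ), (0 : ℤ)) = ((x + 2 * k, 0) : Pt) := by
    simp [Prod.ext_iff]
  rw [e1, e2] at h
  exact h

lemma isLargePath_splice {p1 q1 p2 q2 v : Pt} {l1 l2 : List Pt} {t1 t2 : ℕ}
    (h1 : IsLargePath p1 q1 l1) (h2 : IsLargePath p2 q2 l2)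
    (ht2 : t2 ≤ l2.length)
    (hv1 : endpt p1 (l1.take t1) = v) (hv2 : endpt p2 (l2.take t2) = v) :
    IsLargePath p1 q2 (l1.take t1 ++ l2.drop t2) := by
  refine ⟨?_, ?_, ?_⟩
  · intro s hs
    rcases List.mem_append.mp hs with h | h
    exacts [h1.1 s (List.take_subset _ _ h), h2.1 s (List.drop_subset _ _ h)]
  · intro w hw
    rcases (mem_pts_append _ _ _).mp hw with h | h
    · apply h1.2.1
      rw [pts_take] at h
      exact List.take_subset _ _ h
    · rw [hv1, ← hv2, pts_drop p2 l2 t2 ht2] at h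
      exact h2.2.1 w (List.drop_subset _ _ h)
  · rw [endpt_append, hv1, ← hv2, ← endpt_append, List.take_append_drop]
    exact h2.2.2

lemma pts_splice {p1 p2 v : Pt} (l1 l2 : List Pt) {t1 t2 : ℕ}
    (ht2 : t2 ≤ l2.length)
    (hv1 : endpt p1 (l1.take t1) = v) (hv2 : endpt p2 (l2.take t2) = v) :
    pts p1 (l1.take t1 ++ l2.drop t2) =
      (pts p1 l1).take (t1 + 1) ++ (pts p2 l2).drop (t2 + 1) := by
  rw [pts_append, pts_take, hv1, ← hv2, pts_drop p2 l2 t2 ht2, List.tail_drop]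

lemma mem_take_append_drop_iff {α : Type*} {w : α} (l : List α) (t : ℕ) :
    w ∈ l ↔ w ∈ l.take (t + 1) ∨ w ∈ l.drop (t + 1) := by
  conv_lhs => rw [← List.take_append_drop (t + 1) l]
  exact List.mem_append

lemma not_mem_drop_of_lt {α : Type*} {l : List α} (hnd : l.Nodup) {s t : ℕ}
    (hs : s < l.length) (hst : s < t) : l[s] ∉ l.drop t := by
  intro hmem
  obtain ⟨k, hk, he⟩ := List.mem_iff_getElem.mp hmem
  rw [List.getElem_drop] at he
  have := hnd.getElem_inj_iff.mp he
  omega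

lemma getElem_take_append {α : Type*} (l1 l2 : List α) {t s : ℕ} (hs : s < t)
    (ht : t ≤ l1.length) :
    (l1.take t ++ l2)[s]'(by rw [List.length_append, List.length_take]; omega) =
      l1[s]'(by omega) := by
  rw [List.getElem_append_left (by rw [List.length_take]; omega)]
  exact List.getElem_take

lemma getElem_mem_take {α : Type*} (l : List α) {t : ℕ} (ht : t < l.length) :
    l[t] ∈ l.take (t + 1) := by
  apply List.mem_iff_getElem.mpr
  exact ⟨t, by rw [List.length_take]; omega, List.getElem_take⟩

lemma getElem_mem_drop {α : Type*} (l : List α) {t : ℕ} (ht : t < l.length) :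
    l[t] ∈ l.drop t := by
  rw [List.drop_eq_getElem_cons ht]
  exact List.mem_cons_self

end LGV

namespace LGV

attribute [local instance] Classical.propDecidable

section Swap

variable {n : ℕ}

/-- sources -/
def Af (i : Fin n) : Pt := (-(2 * (i : ℤ) + 1), 0)
/-- sinks -/
def Bf (i : Fin n) : Pt := (2 * (i : ℤ) + 1, 0)

def meets (π : Fin n → List Pt) (k l : Fin n) : Prop :=
  ∃ v, v ∈ pts (Af k) (π k) ∧ v ∈ pts (Af l) (π l)

def Bd (π : Fin n → List Pt) : Prop := ∃ i j : Fin n, i ≠ j ∧ meets π i j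

noncomputable def iSet (π : Fin n → List Pt) : Finset (Fin n) :=
  Finset.univ.filter fun k => ∃ l, l ≠ k ∧ meets π k l

lemma mem_iSet {π : Fin n → List Pt} {k : Fin n} :
    k ∈ iSet π ↔ ∃ l, l ≠ k ∧ meets π k l := by
  simp [iSet]

lemma meets_comm {π : Fin n → List Pt} {k l : Fin n} (h : meets π k l) : meets π l k := by
  obtain ⟨v, h1, h2⟩ := h
  exact ⟨v, h2, h1⟩

lemma iSet_nonempty {π : Fin n → List Pt} (hb : Bd π) : (iSet π).Nonempty := by
  obtain ⟨i, j, hne, hm⟩ := hb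
  exact ⟨i, mem_iSet.mpr ⟨j, hne.symm, hm⟩⟩

noncomputable def i0 (π : Fin n → List Pt) (hb : Bd π) : Fin n :=
  (iSet π).min' (iSet_nonempty hb)

lemma i0_mem {π : Fin n → List Pt} (hb : Bd π) : i0 π hb ∈ iSet π :=
  Finset.min'_mem _ _

/-- predicate: the `t`-th point of path `i` lies on some other path -/
def tPred (π : Fin n → List Pt) (i : Fin n) (t : ℕ) : Prop :=
  t < (pts (Af i) (π i)).length ∧
    ∃ l, l ≠ i ∧ (pts (Af i) (π i)).getD t (0, 0) ∈ pts (Af l) (π l)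

lemma exists_tPred {π : Fin n → List Pt} (hb : Bd π) : ∃ t, tPred π (i0 π hb) t := by
  obtain ⟨l, hl, v, hv1, hv2⟩ := mem_iSet.mp (i0_mem hb)
  obtain ⟨t, ht, he⟩ := List.mem_iff_getElem.mp hv1
  exact ⟨t, ht, l, hl, by rw [List.getD_eq_getElem _ _ ht, he]; exact hv2⟩

noncomputable def ti0 (π : Fin n → List Pt) (hb : Bd π) : ℕ := Nat.find (exists_tPred hb)

noncomputable def v0 (π : Fin n → List Pt) (hb : Bd π) : Pt :=
  (pts (Af (i0 π hb)) (π (i0 π hb))).getD (ti0 π hb) (0, 0)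

lemma ti0_lt {π : Fin n → List Pt} (hb : Bd π) :
    ti0 π hb < (pts (Af (i0 π hb)) (π (i0 π hb))).length :=
  (Nat.find_spec (exists_tPred hb)).1

lemma ti0_le {π : Fin n → List Pt} (hb : Bd π) : ti0 π hb ≤ (π (i0 π hb)).length := by
  have := ti0_lt hb
  rw [pts_length] at this
  omega

lemma v0_getElem {π : Fin n → List Pt} (hb : Bd π) :
    (pts (Af (i0 π hb)) (π (i0 π hb)))[ti0 π hb]'(ti0_lt hb) = v0 π hb :=
  (List.getD_eq_getElem _ _ (ti0_lt hb)).symm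

lemma v0_other {π : Fin n → List Pt} (hb : Bd π) :
    ∃ l, l ≠ i0 π hb ∧ v0 π hb ∈ pts (Af l) (π l) :=
  (Nat.find_spec (exists_tPred hb)).2

lemma ti0_min {π : Fin n → List Pt} (hb : Bd π) {s : ℕ} (hs : s < ti0 π hb) :
    ¬ tPred π (i0 π hb) s :=
  Nat.find_min (exists_tPred hb) hs

lemma v0_mem_i {π : Fin n → List Pt} (hb : Bd π) :
    v0 π hb ∈ pts (Af (i0 π hb)) (π (i0 π hb)) := by
  rw [← v0_getElem hb]
  exact List.getElem_mem _

lemma v0_endpt_i {π : Fin n → List Pt} (hb : Bd π) :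
    endpt (Af (i0 π hb)) ((π (i0 π hb)).take (ti0 π hb)) = v0 π hb := by
  rw [← v0_getElem hb, getElem_pts]

noncomputable def jSet (π : Fin n → List Pt) (i : Fin n) (v : Pt) : Finset (Fin n) :=
  Finset.univ.filter fun l => l ≠ i ∧ v ∈ pts (Af l) (π l)

lemma mem_jSet {π : Fin n → List Pt} {i l : Fin n} {v : Pt} :
    l ∈ jSet π i v ↔ l ≠ i ∧ v ∈ pts (Af l) (π l) := by
  simp [jSet]

lemma jSet_nonempty {π : Fin n → List Pt} (hb : Bd π) :
    (jSet π (i0 π hb) (v0 π hb)).Nonempty := by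
  obtain ⟨l, hl1, hl2⟩ := v0_other hb
  exact ⟨l, mem_jSet.mpr ⟨hl1, hl2⟩⟩

noncomputable def j0 (π : Fin n → List Pt) (hb : Bd π) : Fin n :=
  (jSet π (i0 π hb) (v0 π hb)).min' (jSet_nonempty hb)

lemma j0_spec {π : Fin n → List Pt} (hb : Bd π) :
    j0 π hb ≠ i0 π hb ∧ v0 π hb ∈ pts (Af (j0 π hb)) (π (j0 π hb)) :=
  mem_jSet.mp (Finset.min'_mem _ _)

def tjPred (π : Fin n → List Pt) (j : Fin n) (v : Pt) (t : ℕ) : Prop :=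
  t < (pts (Af j) (π j)).length ∧ (pts (Af j) (π j)).getD t (0, 0) = v

lemma exists_tjPred {π : Fin n → List Pt} (hb : Bd π) :
    ∃ t, tjPred π (j0 π hb) (v0 π hb) t := by
  obtain ⟨t, ht, he⟩ := List.mem_iff_getElem.mp (j0_spec hb).2
  exact ⟨t, ht, by rw [List.getD_eq_getElem _ _ ht, he]⟩

noncomputable def tj0 (π : Fin n → List Pt) (hb : Bd π) : ℕ := Nat.find (exists_tjPred hb)

lemma tj0_lt {π : Fin n → List Pt} (hb : Bd π) :
    tj0 π hb < (pts (Af (j0 π hb)) (π (j0 π hb))).length :=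
  (Nat.find_spec (exists_tjPred hb)).1

lemma tj0_le {π : Fin n → List Pt} (hb : Bd π) : tj0 π hb ≤ (π (j0 π hb)).length := by
  have := tj0_lt hb
  rw [pts_length] at this
  omega

lemma v0_getElem_j {π : Fin n → List Pt} (hb : Bd π) :
    (pts (Af (j0 π hb)) (π (j0 π hb)))[tj0 π hb]'(tj0_lt hb) = v0 π hb := by
  have h := (Nat.find_spec (exists_tjPred hb)).2
  rw [List.getD_eq_getElem _ _ ((Nat.find_spec (exists_tjPred hb)).1)] at h
  exact h

lemma tj0_min {π : Fin n → List Pt} (hb : Bd π) {s : ℕ} (hs : s < tj0 π hb) :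
    ¬ tjPred π (j0 π hb) (v0 π hb) s :=
  Nat.find_min (exists_tjPred hb) hs

lemma v0_endpt_j {π : Fin n → List Pt} (hb : Bd π) :
    endpt (Af (j0 π hb)) ((π (j0 π hb)).take (tj0 π hb)) = v0 π hb := by
  rw [← v0_getElem_j hb, getElem_pts]

/-- the tail swap -/
noncomputable def swapT (π : Fin n → List Pt) (hb : Bd π) : Fin n → List Pt :=
  Function.update
    (Function.update π (i0 π hb)
      ((π (i0 π hb)).take (ti0 π hb) ++ (π (j0 π hb)).drop (tj0 π hb)))
    (j0 π hb)
    ((π (j0 π hb)).take (tj0 π hb) ++ (π (i0 π hb)).drop (ti0 π hb))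

lemma swapT_i {π : Fin n → List Pt} (hb : Bd π) :
    swapT π hb (i0 π hb) =
      (π (i0 π hb)).take (ti0 π hb) ++ (π (j0 π hb)).drop (tj0 π hb) := by
  rw [swapT, Function.update_of_ne (j0_spec hb).1.symm, Function.update_self]

lemma swapT_j {π : Fin n → List Pt} (hb : Bd π) :
    swapT π hb (j0 π hb) =
      (π (j0 π hb)).take (tj0 π hb) ++ (π (i0 π hb)).drop (ti0 π hb) := by
  rw [swapT, Function.update_self]

lemma swapT_other {π : Fin n → List Pt} (hb : Bd π) {k : Fin n}
    (h1 : k ≠ i0 π hb) (h2 : k ≠ j0 π hb) : swapT π hb k = π k := by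
  rw [swapT, Function.update_of_ne h2, Function.update_of_ne h1]

end Swap
end LGV

namespace LGV

attribute [local instance] Classical.propDecidable

section Swap2

variable {n : ℕ} {π : Fin n → List Pt}

lemma min'_congr {α : Type*} [LinearOrder α] {s t : Finset α} (h : s = t) {hs : s.Nonempty} :
    s.min' hs = t.min' (h ▸ hs) := by subst h; rfl

lemma pts_swapT_i (hb : Bd π) :
    pts (Af (i0 π hb)) (swapT π hb (i0 π hb)) =
      (pts (Af (i0 π hb)) (π (i0 π hb))).take (ti0 π hb + 1) ++
        (pts (Af (j0 π hb)) (π (j0 π hb))).drop (tj0 π hb + 1) := by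
  rw [swapT_i hb]
  exact pts_splice _ _ (tj0_le hb) (v0_endpt_i hb) (v0_endpt_j hb)

lemma pts_swapT_j (hb : Bd π) :
    pts (Af (j0 π hb)) (swapT π hb (j0 π hb)) =
      (pts (Af (j0 π hb)) (π (j0 π hb))).take (tj0 π hb + 1) ++
        (pts (Af (i0 π hb)) (π (i0 π hb))).drop (ti0 π hb + 1) := by
  rw [swapT_j hb]
  exact pts_splice _ _ (ti0_le hb) (v0_endpt_j hb) (v0_endpt_i hb)

lemma mem_swap_i_iff (hb : Bd π) (w : Pt) :
    w ∈ pts (Af (i0 π hb)) (swapT π hb (i0 π hb)) ↔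
      w ∈ (pts (Af (i0 π hb)) (π (i0 π hb))).take (ti0 π hb + 1) ∨
        w ∈ (pts (Af (j0 π hb)) (π (j0 π hb))).drop (tj0 π hb + 1) := by
  rw [pts_swapT_i hb]
  exact List.mem_append

lemma mem_swap_j_iff (hb : Bd π) (w : Pt) :
    w ∈ pts (Af (j0 π hb)) (swapT π hb (j0 π hb)) ↔
      w ∈ (pts (Af (j0 π hb)) (π (j0 π hb))).take (tj0 π hb + 1) ∨
        w ∈ (pts (Af (i0 π hb)) (π (i0 π hb))).drop (ti0 π hb + 1) := by
  rw [pts_swapT_j hb]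
  exact List.mem_append

lemma v0_mem_swap_i (hb : Bd π) :
    v0 π hb ∈ pts (Af (i0 π hb)) (swapT π hb (i0 π hb)) := by
  rw [mem_swap_i_iff hb]
  left
  rw [← v0_getElem hb]
  exact getElem_mem_take _ (ti0_lt hb)

lemma v0_mem_swap_j (hb : Bd π) :
    v0 π hb ∈ pts (Af (j0 π hb)) (swapT π hb (j0 π hb)) := by
  rw [mem_swap_j_iff hb]
  left
  rw [← v0_getElem_j hb]
  exact getElem_mem_take _ (tj0_lt hb)

lemma Bd_swapT (hb : Bd π) : Bd (swapT π hb) :=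
  ⟨i0 π hb, j0 π hb, (j0_spec hb).1.symm, v0 π hb, v0_mem_swap_i hb, v0_mem_swap_j hb⟩

lemma mem_swap_sub_i (hb : Bd π) {w : Pt}
    (h : w ∈ pts (Af (i0 π hb)) (swapT π hb (i0 π hb))) :
    w ∈ pts (Af (i0 π hb)) (π (i0 π hb)) ∨ w ∈ pts (Af (j0 π hb)) (π (j0 π hb)) := by
  rcases (mem_swap_i_iff hb w).mp h with h | h
  · exact Or.inl (List.take_subset _ _ h)
  · exact Or.inr (List.drop_subset _ _ h)

lemma mem_swap_sub_j (hb : Bd π) {w : Pt}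
    (h : w ∈ pts (Af (j0 π hb)) (swapT π hb (j0 π hb))) :
    w ∈ pts (Af (j0 π hb)) (π (j0 π hb)) ∨ w ∈ pts (Af (i0 π hb)) (π (i0 π hb)) := by
  rcases (mem_swap_j_iff hb w).mp h with h | h
  · exact Or.inl (List.take_subset _ _ h)
  · exact Or.inr (List.drop_subset _ _ h)

lemma mem_union_swap (hb : Bd π) (w : Pt) :
    (w ∈ pts (Af (i0 π hb)) (swapT π hb (i0 π hb)) ∨
        w ∈ pts (Af (j0 π hb)) (swapT π hb (j0 π hb))) ↔
      (w ∈ pts (Af (i0 π hb)) (π (i0 π hb)) ∨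
        w ∈ pts (Af (j0 π hb)) (π (j0 π hb))) := by
  constructor
  · rintro (h | h)
    · exact mem_swap_sub_i hb h
    · rcases mem_swap_sub_j hb h with h | h
      exacts [Or.inr h, Or.inl h]
  · rintro (h | h)
    · rcases (mem_take_append_drop_iff _ (ti0 π hb)).mp h with h | h
      · exact Or.inl ((mem_swap_i_iff hb w).mpr (Or.inl h))
      · exact Or.inr ((mem_swap_j_iff hb w).mpr (Or.inr h))
    · rcases (mem_take_append_drop_iff _ (tj0 π hb)).mp h with h | h
      · exact Or.inr ((mem_swap_j_iff hb w).mpr (Or.inl h))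
      · exact Or.inl ((mem_swap_i_iff hb w).mpr (Or.inr h))

lemma iSet_swapT (hb : Bd π) : iSet (swapT π hb) = iSet π := by
  ext k
  rw [mem_iSet, mem_iSet]
  by_cases hki : k = i0 π hb
  · subst hki
    constructor
    · intro _
      exact mem_iSet.mp (i0_mem hb)
    · intro _
      exact ⟨j0 π hb, (j0_spec hb).1, v0 π hb, v0_mem_swap_i hb, v0_mem_swap_j hb⟩
  · by_cases hkj : k = j0 π hb
    · subst hkj
      constructor
      · intro _
        exact ⟨i0 π hb, (j0_spec hb).1.symm, v0 π hb, (j0_spec hb).2, v0_mem_i hb⟩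
      · intro _
        exact ⟨i0 π hb, (j0_spec hb).1.symm, v0 π hb, v0_mem_swap_j hb, v0_mem_swap_i hb⟩
    · have hpk : swapT π hb k = π k := swapT_other hb hki hkj
      constructor
      · rintro ⟨l, hlk, v, hv1, hv2⟩
        rw [hpk] at hv1
        by_cases hli : l = i0 π hb
        · subst hli
          rcases mem_swap_sub_i hb hv2 with h | h
          · exact ⟨i0 π hb, Ne.symm hki, v, hv1, h⟩
          · exact ⟨j0 π hb, Ne.symm hkj, v, hv1, h⟩
        · by_cases hlj : l = j0 π hb
          · subst hlj
            rcases mem_swap_sub_j hb hv2 with h | h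
            · exact ⟨j0 π hb, Ne.symm hkj, v, hv1, h⟩
            · exact ⟨i0 π hb, Ne.symm hki, v, hv1, h⟩
          · rw [swapT_other hb hli hlj] at hv2
            exact ⟨l, hlk, v, hv1, hv2⟩
      · rintro ⟨l, hlk, v, hv1, hv2⟩
        rw [← hpk] at hv1
        by_cases hli : l = i0 π hb
        · subst hli
          rcases (mem_union_swap hb v).mpr (Or.inl hv2) with h | h
          · exact ⟨i0 π hb, Ne.symm hki, v, hv1, h⟩
          · exact ⟨j0 π hb, Ne.symm hkj, v, hv1, h⟩
        · by_cases hlj : l = j0 π hb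
          · subst hlj
            rcases (mem_union_swap hb v).mpr (Or.inr hv2) with h | h
            · exact ⟨i0 π hb, Ne.symm hki, v, hv1, h⟩
            · exact ⟨j0 π hb, Ne.symm hkj, v, hv1, h⟩
          · rw [← swapT_other hb hli hlj] at hv2
            exact ⟨l, hlk, v, hv1, hv2⟩

lemma i0_swapT (hb : Bd π) (hb' : Bd (swapT π hb)) : i0 (swapT π hb) hb' = i0 π hb :=
  min'_congr (iSet_swapT hb)

lemma len_pts_swap_i (hb : Bd π) :
    (pts (Af (i0 π hb)) (swapT π hb (i0 π hb))).length =
      (ti0 π hb + 1) + ((pts (Af (j0 π hb)) (π (j0 π hb))).length - (tj0 π hb + 1)) := by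
  rw [pts_swapT_i hb, List.length_append, List.length_take, List.length_drop]
  have h1 := ti0_lt hb
  omega

lemma len_pts_swap_j (hb : Bd π) :
    (pts (Af (j0 π hb)) (swapT π hb (j0 π hb))).length =
      (tj0 π hb + 1) + ((pts (Af (i0 π hb)) (π (i0 π hb))).length - (ti0 π hb + 1)) := by
  rw [pts_swapT_j hb, List.length_append, List.length_take, List.length_drop]
  have h1 := tj0_lt hb
  omega

lemma getElem_pts_swap_i (hb : Bd π) {s : ℕ} (hs : s ≤ ti0 π hb) :
    (pts (Af (i0 π hb)) (swapT π hb (i0 π hb)))[s]'(by rw [len_pts_swap_i hb]; omega) =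
      (pts (Af (i0 π hb)) (π (i0 π hb)))[s]'(by have := ti0_lt hb; omega) := by
  rw [List.getElem_of_eq (pts_swapT_i hb)]
  exact getElem_take_append _ _ (by omega) (by have := ti0_lt hb; omega)

lemma getElem_pts_swap_j (hb : Bd π) {s : ℕ} (hs : s ≤ tj0 π hb) :
    (pts (Af (j0 π hb)) (swapT π hb (j0 π hb)))[s]'(by rw [len_pts_swap_j hb]; omega) =
      (pts (Af (j0 π hb)) (π (j0 π hb)))[s]'(by have := tj0_lt hb; omega) := by
  rw [List.getElem_of_eq (pts_swapT_j hb)]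
  exact getElem_take_append _ _ (by omega) (by have := tj0_lt hb; omega)

end Swap2
end LGV

namespace LGV

attribute [local instance] Classical.propDecidable

section Swap3

variable {n : ℕ} {π : Fin n → List Pt}

lemma ti0_swapT (hst : ∀ k, ∀ s ∈ π k, Stp s) (hb : Bd π) (hb' : Bd (swapT π hb)) :
    ti0 (swapT π hb) hb' = ti0 π hb := by
  rw [ti0, Nat.find_eq_iff]
  rw [i0_swapT hb hb']
  constructor
  · refine ⟨by rw [len_pts_swap_i hb]; omega, j0 π hb, (j0_spec hb).1, ?_⟩
    rw [List.getD_eq_getElem _ _ (by rw [len_pts_swap_i hb]; omega),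
      getElem_pts_swap_i hb le_rfl, v0_getElem hb]
    exact v0_mem_swap_j hb
  · intro s hs hcon
    obtain ⟨hslen, l, hl, hmem⟩ := hcon
    have hsPi : s < (pts (Af (i0 π hb)) (π (i0 π hb))).length := by
      have := ti0_lt hb; omega
    rw [List.getD_eq_getElem _ _ hslen, getElem_pts_swap_i hb (by omega)] at hmem
    apply ti0_min hb hs
    refine ⟨hsPi, ?_⟩
    by_cases hlj : l = j0 π hb
    · subst hlj
      rcases (mem_swap_j_iff hb _).mp hmem with h | h
      · exact ⟨j0 π hb, (j0_spec hb).1,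
          by rw [List.getD_eq_getElem _ _ hsPi]; exact List.take_subset _ _ h⟩
      · exact absurd h (not_mem_drop_of_lt (pts_nodup (hst (i0 π hb))) hsPi (by omega))
    · rw [swapT_other hb hl hlj] at hmem
      exact ⟨l, hl, by rw [List.getD_eq_getElem _ _ hsPi]; exact hmem⟩

lemma v0_swapT (hst : ∀ k, ∀ s ∈ π k, Stp s) (hb : Bd π) (hb' : Bd (swapT π hb)) :
    v0 (swapT π hb) hb' = v0 π hb := by
  rw [v0, i0_swapT hb hb', ti0_swapT hst hb hb',
    List.getD_eq_getElem _ _ (by rw [len_pts_swap_i hb]; omega),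
    getElem_pts_swap_i hb le_rfl, v0_getElem hb]

lemma j0_swapT (hst : ∀ k, ∀ s ∈ π k, Stp s) (hb : Bd π) (hb' : Bd (swapT π hb)) :
    j0 (swapT π hb) hb' = j0 π hb := by
  apply min'_congr
  rw [i0_swapT hb hb', v0_swapT hst hb hb']
  ext l
  rw [mem_jSet, mem_jSet]
  constructor <;> rintro ⟨h1, h2⟩ <;> refine ⟨h1, ?_⟩
  · by_cases hlj : l = j0 π hb
    · subst hlj; exact (j0_spec hb).2
    · rwa [swapT_other hb h1 hlj] at h2
  · by_cases hlj : l = j0 π hb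
    · subst hlj; exact v0_mem_swap_j hb
    · rwa [swapT_other hb h1 hlj]

lemma tj0_swapT (hst : ∀ k, ∀ s ∈ π k, Stp s) (hb : Bd π) (hb' : Bd (swapT π hb)) :
    tj0 (swapT π hb) hb' = tj0 π hb := by
  rw [tj0, Nat.find_eq_iff]
  rw [j0_swapT hst hb hb', v0_swapT hst hb hb']
  constructor
  · refine ⟨by rw [len_pts_swap_j hb]; omega, ?_⟩
    rw [List.getD_eq_getElem _ _ (by rw [len_pts_swap_j hb]; omega),
      getElem_pts_swap_j hb le_rfl, v0_getElem_j hb]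
  · intro s hs hcon
    obtain ⟨hslen, hmem⟩ := hcon
    have hsPj : s < (pts (Af (j0 π hb)) (π (j0 π hb))).length := by
      have := tj0_lt hb; omega
    rw [List.getD_eq_getElem _ _ hslen, getElem_pts_swap_j hb (by omega)] at hmem
    exact tj0_min hb hs ⟨hsPj, by rw [List.getD_eq_getElem _ _ hsPj]; exact hmem⟩

lemma swapT_swapT (hst : ∀ k, ∀ s ∈ π k, Stp s) (hb : Bd π) (hb' : Bd (swapT π hb)) :
    swapT (swapT π hb) hb' = π := by
  have e1 := i0_swapT hb hb'
  have e2 := j0_swapT hst hb hb'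
  have e3 := ti0_swapT hst hb hb'
  have e4 := tj0_swapT hst hb hb'
  funext k
  by_cases hki : k = i0 π hb
  · subst hki
    calc swapT (swapT π hb) hb' (i0 π hb)
        = swapT (swapT π hb) hb' (i0 (swapT π hb) hb') := by rw [e1]
      _ = (swapT π hb (i0 (swapT π hb) hb')).take (ti0 (swapT π hb) hb') ++
            (swapT π hb (j0 (swapT π hb) hb')).drop (tj0 (swapT π hb) hb') := swapT_i hb'
      _ = (swapT π hb (i0 π hb)).take (ti0 π hb) ++
            (swapT π hb (j0 π hb)).drop (tj0 π hb) := by rw [e1, e2, e3, e4]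
      _ = ((π (i0 π hb)).take (ti0 π hb) ++ (π (j0 π hb)).drop (tj0 π hb)).take (ti0 π hb) ++
            ((π (j0 π hb)).take (tj0 π hb) ++ (π (i0 π hb)).drop (ti0 π hb)).drop (tj0 π hb) := by
          rw [swapT_i hb, swapT_j hb]
      _ = (π (i0 π hb)).take (ti0 π hb) ++ (π (i0 π hb)).drop (ti0 π hb) := by
          rw [List.take_left' (by rw [List.length_take]; have := ti0_le hb; omega),
            List.drop_left' (by rw [List.length_take]; have := tj0_le hb; omega)]
      _ = π (i0 π hb) := List.take_append_drop _ _
  · by_cases hkj : k = j0 π hb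
    · subst hkj
      calc swapT (swapT π hb) hb' (j0 π hb)
          = swapT (swapT π hb) hb' (j0 (swapT π hb) hb') := by rw [e2]
        _ = (swapT π hb (j0 (swapT π hb) hb')).take (tj0 (swapT π hb) hb') ++
              (swapT π hb (i0 (swapT π hb) hb')).drop (ti0 (swapT π hb) hb') := swapT_j hb'
        _ = (swapT π hb (j0 π hb)).take (tj0 π hb) ++
              (swapT π hb (i0 π hb)).drop (ti0 π hb) := by rw [e1, e2, e3, e4]
        _ = ((π (j0 π hb)).take (tj0 π hb) ++ (π (i0 π hb)).drop (ti0 π hb)).take (tj0 π hb) ++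
              ((π (i0 π hb)).take (ti0 π hb) ++ (π (j0 π hb)).drop (tj0 π hb)).drop (ti0 π hb) := by
            rw [swapT_i hb, swapT_j hb]
        _ = (π (j0 π hb)).take (tj0 π hb) ++ (π (j0 π hb)).drop (tj0 π hb) := by
            rw [List.take_left' (by rw [List.length_take]; have := tj0_le hb; omega),
              List.drop_left' (by rw [List.length_take]; have := ti0_le hb; omega)]
        _ = π (j0 π hb) := List.take_append_drop _ _
    · rw [swapT_other hb' (by rw [e1]; exact hki) (by rw [e2]; exact hkj),
        swapT_other hb hki hkj]

end Swap3
end LGV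

namespace LGV

attribute [local instance] Classical.propDecidable

section Config

variable {n : ℕ}

def PathSys (n : ℕ) (σ : Equiv.Perm (Fin n)) :=
  {π : Fin n → List Pt // ∀ k, IsLargePath (Af k) (Bf (σ k)) (π k)}

def Config (n : ℕ) := Σ σ : Equiv.Perm (Fin n), PathSys n σ

noncomputable instance instFinitePathSys (σ : Equiv.Perm (Fin n)) : Finite (PathSys n σ) :=
  Finite.of_equiv _ (Equiv.subtypePiEquivPi
    (p := fun k l => IsLargePath (Af k) (Bf (σ k)) l)).symm

noncomputable instance instFiniteConfig : Finite (Config n) := by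
  unfold Config
  infer_instance

lemma swap_sys {σ : Equiv.Perm (Fin n)} (π : Fin n → List Pt)
    (hπ : ∀ k, IsLargePath (Af k) (Bf (σ k)) (π k)) (hb : Bd π) :
    ∀ k, IsLargePath (Af k) (Bf ((σ * Equiv.swap (i0 π hb) (j0 π hb)) k)) (swapT π hb k) := by
  intro k
  by_cases hki : k = i0 π hb
  · subst hki
    rw [swapT_i hb]
    have hval : (σ * Equiv.swap (i0 π hb) (j0 π hb)) (i0 π hb) = σ (j0 π hb) := by
      rw [Equiv.Perm.mul_apply, Equiv.swap_apply_left]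
    rw [hval]
    exact isLargePath_splice (hπ (i0 π hb)) (hπ (j0 π hb)) (tj0_le hb)
      (v0_endpt_i hb) (v0_endpt_j hb)
  · by_cases hkj : k = j0 π hb
    · subst hkj
      rw [swapT_j hb]
      have hval : (σ * Equiv.swap (i0 π hb) (j0 π hb)) (j0 π hb) = σ (i0 π hb) := by
        rw [Equiv.Perm.mul_apply, Equiv.swap_apply_right]
      rw [hval]
      exact isLargePath_splice (hπ (j0 π hb)) (hπ (i0 π hb)) (ti0_le hb)
        (v0_endpt_j hb) (v0_endpt_i hb)
    · rw [swapT_other hb hki hkj]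
      have hval : (σ * Equiv.swap (i0 π hb) (j0 π hb)) k = σ k := by
        rw [Equiv.Perm.mul_apply, Equiv.swap_apply_of_ne_of_ne hki hkj]
      rw [hval]
      exact hπ k

noncomputable def FF (c : Config n) : Config n :=
  if hb : Bd c.2.1 then
    ⟨c.1 * Equiv.swap (i0 c.2.1 hb) (j0 c.2.1 hb), ⟨swapT c.2.1 hb, swap_sys c.2.1 c.2.2 hb⟩⟩
  else c

lemma config_ext {c d : Config n} (h1 : c.1 = d.1) (h2 : c.2.1 = d.2.1) : c = d := by
  obtain ⟨σ, π, hπ⟩ := c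
  obtain ⟨τ, ρ, hρ⟩ := d
  dsimp at h1 h2
  subst h1
  exact congrArg _ (Subtype.ext h2)

lemma FF_fst {c : Config n} (hb : Bd c.2.1) :
    (FF c).1 = c.1 * Equiv.swap (i0 c.2.1 hb) (j0 c.2.1 hb) := by
  simp [FF, hb]

lemma FF_snd {c : Config n} (hb : Bd c.2.1) : (FF c).2.1 = swapT c.2.1 hb := by
  have h : FF c = ⟨c.1 * Equiv.swap (i0 c.2.1 hb) (j0 c.2.1 hb),
      ⟨swapT c.2.1 hb, swap_sys c.2.1 c.2.2 hb⟩⟩ := dif_pos hb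
  rw [h]

lemma i0_congr {ρ ρ' : Fin n → List Pt} (h : ρ = ρ') {hb : Bd ρ} {hb' : Bd ρ'} :
    i0 ρ hb = i0 ρ' hb' := by subst h; rfl

lemma j0_congr {ρ ρ' : Fin n → List Pt} (h : ρ = ρ') {hb : Bd ρ} {hb' : Bd ρ'} :
    j0 ρ hb = j0 ρ' hb' := by subst h; rfl

lemma swapT_congr {ρ ρ' : Fin n → List Pt} (h : ρ = ρ') {hb : Bd ρ} {hb' : Bd ρ'} :
    swapT ρ hb = swapT ρ' hb' := by subst h; rfl

lemma FF_bd {c : Config n} (hb : Bd c.2.1) : Bd (FF c).2.1 := by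
  rw [FF_snd hb]
  exact Bd_swapT hb

lemma FF_ne {c : Config n} (hb : Bd c.2.1) : FF c ≠ c := by
  intro h
  have h1 : (FF c).1 = c.1 := congrArg Sigma.fst h
  rw [FF_fst hb] at h1
  have h2 : Equiv.swap (i0 c.2.1 hb) (j0 c.2.1 hb) = 1 := by
    have := mul_eq_left.mp h1
    exact this
  have h3 := congrArg (fun e : Equiv.Perm (Fin n) => e (i0 c.2.1 hb)) h2
  simp only [Equiv.swap_apply_left, Equiv.Perm.one_apply] at h3
  exact (j0_spec hb).1 h3

lemma FF_FF {c : Config n} (hb : Bd c.2.1) : FF (FF c) = c := by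
  have hb2 : Bd (FF c).2.1 := FF_bd hb
  have hb' : Bd (swapT c.2.1 hb) := Bd_swapT hb
  have hst : ∀ k, ∀ s ∈ c.2.1 k, Stp s := fun k => (c.2.2 k).1
  have e5 : i0 ((FF c).2.1) hb2 = i0 c.2.1 hb :=
    (i0_congr (FF_snd hb) (hb' := hb')).trans (i0_swapT hb hb')
  have e6 : j0 ((FF c).2.1) hb2 = j0 c.2.1 hb :=
    (j0_congr (FF_snd hb) (hb' := hb')).trans (j0_swapT hst hb hb')
  apply config_ext
  · calc (FF (FF c)).1
        = (FF c).1 * Equiv.swap (i0 ((FF c).2.1) hb2) (j0 ((FF c).2.1) hb2) := FF_fst hb2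
      _ = (c.1 * Equiv.swap (i0 c.2.1 hb) (j0 c.2.1 hb)) *
            Equiv.swap (i0 c.2.1 hb) (j0 c.2.1 hb) := by rw [e5, e6, FF_fst hb]
      _ = c.1 := by rw [mul_assoc, Equiv.swap_mul_self, mul_one]
  · rw [FF_snd hb2, swapT_congr (FF_snd hb) (hb' := hb')]
    exact swapT_swapT hst hb hb'

lemma FF_sign {c : Config n} (hb : Bd c.2.1) :
    Equiv.Perm.sign (FF c).1 = - Equiv.Perm.sign c.1 := by
  rw [FF_fst hb, Equiv.Perm.sign_mul, Equiv.Perm.sign_swap (Ne.symm (j0_spec hb).1)]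
  rw [mul_neg_one]

lemma inversion_of_ne {σ : Equiv.Perm (Fin n)} (h : σ ≠ 1) :
    ∃ i j : Fin n, i < j ∧ σ j < σ i := by
  by_contra hc
  push_neg at hc
  have hmono : Monotone σ := by
    intro a b hab
    rcases eq_or_lt_of_le hab with rfl | hlt
    · exact le_rfl
    · exact hc a b hlt
  haveI : WellFoundedLT (Fin n) := Finite.to_wellFoundedLT
  have hsm : StrictMono σ := hmono.strictMono_of_injective σ.injective
  have hsm' : StrictMono (σ⁻¹ : Equiv.Perm (Fin n)) := by
    intro a b hab
    by_contra hle
    push_neg at hle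
    have h2 := hmono hle
    rw [(show ∀ y, σ (σ⁻¹ y) = y from fun y => σ.apply_symm_apply y), (show ∀ y, σ (σ⁻¹ y) = y from fun y => σ.apply_symm_apply y)] at h2
    exact absurd hab (not_lt.mpr h2)
  apply h
  apply Equiv.ext
  intro x
  have h2 := hmono (hsm'.le_apply (x := x))
  rw [(show ∀ y, σ (σ⁻¹ y) = y from fun y => σ.apply_symm_apply y)] at h2
  rw [Equiv.Perm.one_apply]
  exact le_antisymm h2 (hsm.le_apply (x := x))

lemma good_id {σ : Equiv.Perm (Fin n)} {π : Fin n → List Pt}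
    (hπ : ∀ k, IsLargePath (Af k) (Bf (σ k)) (π k)) (hg : ¬ Bd π) : σ = 1 := by
  by_contra h
  obtain ⟨i, j, hij, hσ⟩ := inversion_of_ne h
  apply hg
  have hij' : (i : ℤ) < (j : ℤ) := by exact_mod_cast hij
  have hσ' : ((σ j : Fin n) : ℤ) < ((σ i : Fin n) : ℤ) := by exact_mod_cast hσ
  have hi0 : (0 : ℤ) ≤ (i : ℤ) := Int.natCast_nonneg _
  have hσj0 : (0 : ℤ) ≤ ((σ j : Fin n) : ℤ) := Int.natCast_nonneg _
  obtain ⟨v, hv1, hv2⟩ := must_intersect (L := π i) (M := π j)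
    (a := -(2 * (i : ℤ) + 1)) (b := 2 * ((σ i : Fin n) : ℤ) + 1)
    (c := -(2 * (j : ℤ) + 1)) (d := 2 * ((σ j : Fin n) : ℤ) + 1)
    (hπ i) (hπ j) (by omega) (by omega) (by omega) (by omega) (by omega)
  exact ⟨j, i, hij.ne', v, hv1, hv2⟩

end Config
end LGV

namespace LGV

attribute [local instance] Classical.propDecidable

lemma det_expand (n : ℕ) (a : ℕ → ℝ) :
    (Matrix.of fun i j : Fin n => a ((i : ℕ) + (j : ℕ) + 1)).det =
      ∑ σ : Equiv.Perm (Fin n),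
        ((Equiv.Perm.sign σ : ℤ) : ℝ) * ∏ i : Fin n, a ((i : ℕ) + (σ i : ℕ) + 1) := by
  rw [Matrix.det_apply']
  refine Finset.sum_congr rfl fun σ _ => ?_
  congr 1
  refine Finset.prod_congr rfl fun i _ => ?_
  rw [Matrix.of_apply, Nat.add_comm (σ i : ℕ) (i : ℕ)]

lemma card_pathSys (n : ℕ) (σ : Equiv.Perm (Fin n)) :
    (Nat.card (PathSys n σ) : ℝ) = ∏ i : Fin n, (schR ((i : ℕ) + (σ i : ℕ) + 1) : ℝ) := by
  rw [← Nat.cast_prod]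
  congr 1
  calc Nat.card (PathSys n σ)
      = Nat.card (∀ k, {l : List Pt // IsLargePath (Af k) (Bf (σ k)) l}) :=
        Nat.card_congr Equiv.subtypePiEquivPi
    _ = ∏ k : Fin n, Nat.card {l : List Pt // IsLargePath (Af k) (Bf (σ k)) l} := Nat.card_pi
    _ = ∏ k : Fin n, schR ((k : ℕ) + (σ k : ℕ) + 1) := by
        refine Finset.prod_congr rfl fun k _ => ?_
        have he : Bf (σ k) =
            ((-(2 * (k : ℤ) + 1)) + 2 * (((k : ℕ) + (σ k : ℕ) + 1 : ℕ) : ℤ), 0) := by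
          rw [Bf, Prod.ext_iff]
          constructor
          · push_cast; ring
          · rfl
        have ha : Af k = ((-(2 * (k : ℤ) + 1), 0) : Pt) := rfl
        rw [ha, he]
        exact schR_eq _ _

/-- equivalence between good configurations and `Π n` -/
noncomputable def goodEquiv (n : ℕ) : {c : Config n // ¬ Bd c.2.1} ≃ ↥(PiSet n) where
  toFun c := ⟨c.1.2.1, by
    have hσ : c.1.1 = 1 := good_id c.1.2.2 c.2
    constructor
    · intro i
      have h := c.1.2.2 i
      have hfix : c.1.1 i = i := by rw [hσ]; rfl
      have h2 : Bf (c.1.1 i) = Bf i := congrArg Bf hfix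
      rw [h2] at h
      exact h
    · intro i j hij v hv hv'
      exact c.2 ⟨i, j, hij, v, hv, hv'⟩⟩
  invFun π := ⟨⟨1, ⟨π.1, fun k => π.2.1 k⟩⟩, by
    rintro ⟨i, j, hne, v, h1, h2⟩
    exact π.2.2 i j hne v h1 h2⟩
  left_inv c := by
    apply Subtype.ext
    apply config_ext
    · exact (good_id c.1.2.2 c.2).symm
    · rfl
  right_inv π := by
    apply Subtype.ext
    rfl

lemma main_count (n : ℕ) :
    ∑ σ : Equiv.Perm (Fin n),
        ((Equiv.Perm.sign σ : ℤ) : ℝ) * (Nat.card (PathSys n σ) : ℝ) =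
      (Nat.card ↥(PiSet n) : ℝ) := by
  haveI : ∀ σ : Equiv.Perm (Fin n), Fintype (PathSys n σ) := fun σ => Fintype.ofFinite _
  have h1 : ∀ σ : Equiv.Perm (Fin n),
      (Nat.card (PathSys n σ) : ℝ) = ∑ _π : PathSys n σ, (1 : ℝ) := by
    intro σ
    rw [Nat.card_eq_fintype_card]
    simp
  have h2 : ∑ σ : Equiv.Perm (Fin n),
      ((Equiv.Perm.sign σ : ℤ) : ℝ) * (Nat.card (PathSys n σ) : ℝ) =
      ∑ c : (Σ σ₀ : Equiv.Perm (Fin n), PathSys n σ₀), ((Equiv.Perm.sign c.1 : ℤ) : ℝ) := by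
    rw [← Finset.univ_sigma_univ, Finset.sum_sigma]
    refine Finset.sum_congr rfl fun σ _ => ?_
    rw [h1, Finset.mul_sum]
    simp
  rw [h2]
  rw [← Finset.sum_filter_add_sum_filter_not Finset.univ (fun c : (Σ σ₀ : Equiv.Perm (Fin n), PathSys n σ₀) => Bd c.2.1)]
  have hbad : ∑ c ∈ Finset.univ.filter (fun c : (Σ σ₀ : Equiv.Perm (Fin n), PathSys n σ₀) => Bd c.2.1),
      ((Equiv.Perm.sign c.1 : ℤ) : ℝ) = 0 := by
    refine Finset.sum_involution (fun c _ => FF c) ?_ ?_ ?_ ?_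
    · intro c hc
      have hb : Bd c.2.1 := (Finset.mem_filter.mp hc).2
      have := FF_sign hb
      rw [this]
      push_cast
      ring
    · intro c hc _
      exact FF_ne (Finset.mem_filter.mp hc).2
    · intro c hc
      exact Finset.mem_filter.mpr ⟨Finset.mem_univ _, FF_bd (Finset.mem_filter.mp hc).2⟩
    · intro c hc
      exact FF_FF (Finset.mem_filter.mp hc).2
  rw [hbad, zero_add]
  have hgood : ∑ c ∈ Finset.univ.filter (fun c : (Σ σ₀ : Equiv.Perm (Fin n), PathSys n σ₀) => ¬ Bd c.2.1),
      ((Equiv.Perm.sign c.1 : ℤ) : ℝ) =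
      (Finset.univ.filter (fun c : (Σ σ₀ : Equiv.Perm (Fin n), PathSys n σ₀) => ¬ Bd c.2.1)).card := by
    rw [Finset.sum_congr rfl (fun c hc => ?_), Finset.sum_const, nsmul_eq_mul, mul_one]
    have hσ : c.1 = 1 := good_id c.2.2 (Finset.mem_filter.mp hc).2
    rw [hσ]
    simp
  rw [hgood]
  congr 1
  rw [← Fintype.card_subtype]
  rw [← Nat.card_eq_fintype_card]
  exact Nat.card_congr (goodEquiv n)

end LGV


/-- Lindström–Gessel–Viennot for Schröder Hankel matrices: for any real sequence the
determinant of `[a_{i+j-1}]` is the signed sum over permutations of products of entries,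
and specialized to the large Schröder numbers (where `r_{i+j-1}` counts large Schröder
paths from `A_i = (-2i+1,0)` to `B_j = (2j-1,0)`) it equals `|Π_n|`. -/
theorem lgv_hankel (n : ℕ) :
    (∀ a : ℕ → ℝ,
        (Matrix.of fun i j : Fin n => a ((i : ℕ) + (j : ℕ) + 1)).det =
          ∑ σ : Equiv.Perm (Fin n),
            ((Equiv.Perm.sign σ : ℤ) : ℝ) * ∏ i : Fin n, a ((i : ℕ) + (σ i : ℕ) + 1)) ∧
      (Matrix.of fun i j : Fin n => (schR ((i : ℕ) + (j : ℕ) + 1) : ℝ)).det =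
        (Nat.card ↥(PiSet n) : ℝ) := by
  constructor
  · exact LGV.det_expand n
  · rw [LGV.det_expand n (fun k => (schR k : ℝ))]
    rw [← LGV.main_count n]
    refine Finset.sum_congr rfl fun σ _ => ?_
    rw [LGV.card_pathSys n σ]
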